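/- For all n ≥ 0, r ≥ 0, and j ≥ 1, p^{r+1}_j(n) = 2·p^r_j(n) − p^r_{j−1}(n), where p^r_j(n) := ∑_{s=0}^{n} C(n,s) · J^{j−1}_s · r^{n−s} for j ≥ 1 and p^r_0(n) := r^n. -/

import Mathlib

/-- Stirling numbers of the second kind. -/
def stirling : ℕ → ℕ → ℕ
  | 0, 0 => 1
  | 0, _ + 1 => 0
  | _ + 1, 0 => 0
  | n + 1, s + 1 => (s + 1) * stirling n (s + 1) + stirling n s

/-- `J k n`: the number of barred preferential arrangements of an `n`-set with `k` bars,
given by its closed form `∑ S(n,s)·s!·C(k+s,s)`. -/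
def J (k n : ℕ) : ℕ :=
  ∑ s ∈ Finset.range (n + 1), stirling n s * s.factorial * (k + s).choose s

/-- `P r j n`: barred preferential arrangements of an `n`-set with `r + j - 1` bars,
with `r` restricted sections and `j` free sections. -/
def P (r : ℕ) : ℕ → ℕ → ℕ
  | 0, n => r ^ n
  | j + 1, n => ∑ s ∈ Finset.range (n + 1), n.choose s * J j s * r ^ (n - s)

/-- `D k n` is `J (k-1) n` for `k ≥ 1`, and `0^n` for `k = 0`. -/
def D (k n : ℕ) : ℕ :=
  ∑ s ∈ Finset.range (n + 1), stirling n s * s.factorial * (k + s - 1).choose s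

lemma stirling_eq_zero_of_lt : ∀ {n s : ℕ}, n < s → stirling n s = 0
  | 0, s + 1, _ => rfl
  | n + 1, s + 1, h => by
      have h1 : n < s + 1 := by omega
      have h2 : n < s := by omega
      simp [stirling, stirling_eq_zero_of_lt h1, stirling_eq_zero_of_lt h2]

lemma stirling_succ_zero (n : ℕ) : stirling (n + 1) 0 = 0 := rfl

lemma sum_choose_stirling (n : ℕ) : ∀ s : ℕ,
    ∑ m ∈ Finset.range (n + 1), n.choose m * stirling m s = stirling (n + 1) (s + 1) := by
  induction n with
  | zero =>
    intro s
    simp [stirling]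
  | succ n ih =>
    intro s
    calc ∑ m ∈ Finset.range (n + 2), (n + 1).choose m * stirling m s
        = stirling 0 s + ∑ m ∈ Finset.range (n + 1),
            (n.choose (m + 1) * stirling (m + 1) s + n.choose m * stirling (m + 1) s) := by
          rw [Finset.sum_range_succ' (fun m => (n + 1).choose m * stirling m s)]
          simp only [Nat.choose_zero_right, Nat.one_mul, Nat.choose_succ_succ',
            Nat.add_mul, Nat.add_comm]
      _ = (stirling 0 s + ∑ m ∈ Finset.range (n + 1), n.choose (m + 1) * stirling (m + 1) s)
            + ∑ m ∈ Finset.range (n + 1), n.choose m * stirling (m + 1) s := by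
          rw [Finset.sum_add_distrib]; ring
      _ = stirling (n + 1) (s + 1)
            + ∑ m ∈ Finset.range (n + 1), n.choose m * stirling (m + 1) s := by
          congr 1
          have := Finset.sum_range_succ' (fun m => n.choose m * stirling m s) (n + 1)
          simp only [Nat.choose_zero_right, Nat.one_mul] at this
          rw [Nat.add_comm, ← this, Finset.sum_range_succ, ih s]
          simp [stirling_eq_zero_of_lt (Nat.lt_succ_self n)]
      _ = stirling (n + 2) (s + 1) := by
          cases s with
          | zero =>
            simp only [stirling_succ_zero, Nat.mul_zero, Finset.sum_const_zero, Nat.add_zero]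
            show stirling (n + 1) 1 = stirling (n + 2) 1
            show stirling (n + 1) 1 = 1 * stirling (n + 1) 1 + stirling (n + 1) 0
            simp [stirling_succ_zero]
          | succ t =>
            have : ∀ m, stirling (m + 1) (t + 1) =
                (t + 1) * stirling m (t + 1) + stirling m t := fun m => rfl
            calc stirling (n + 1) (t + 2)
                  + ∑ m ∈ Finset.range (n + 1), n.choose m * stirling (m + 1) (t + 1)
                = stirling (n + 1) (t + 2)
                  + ((t + 1) * ∑ m ∈ Finset.range (n + 1), n.choose m * stirling m (t + 1)
                    + ∑ m ∈ Finset.range (n + 1), n.choose m * stirling m t) := by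
                  rw [Finset.mul_sum, ← Finset.sum_add_distrib]
                  congr 1
                  refine Finset.sum_congr rfl fun m _ => ?_
                  rw [this m]; ring
              _ = stirling (n + 1) (t + 2)
                  + ((t + 1) * stirling (n + 1) (t + 2) + stirling (n + 1) (t + 1)) := by
                  rw [ih (t + 1), ih t]
              _ = stirling (n + 2) (t + 2) := by
                  show _ = (t + 2) * stirling (n + 1) (t + 2) + stirling (n + 1) (t + 1)
                  ring

lemma J_ext (k m n : ℕ) (h : m ≤ n) :
    J k m = ∑ s ∈ Finset.range (n + 1), stirling m s * s.factorial * (k + s).choose s := by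
  rw [J]
  refine Finset.sum_subset ?_ ?_
  · exact Finset.range_subset_range.2 (by omega)
  · intro s _ hs
    rw [Finset.mem_range, not_lt] at hs
    rw [stirling_eq_zero_of_lt (by omega), Nat.zero_mul, Nat.zero_mul]

lemma keyJ (k n : ℕ) :
    (∑ m ∈ Finset.range (n + 1), n.choose m * J k m) + D k n = 2 * J k n := by
  have h1 : ∑ m ∈ Finset.range (n + 1), n.choose m * J k m
      = ∑ s ∈ Finset.range (n + 1),
          stirling (n + 1) (s + 1) * (s.factorial * (k + s).choose s) := by
    calc ∑ m ∈ Finset.range (n + 1), n.choose m * J k m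
        = ∑ m ∈ Finset.range (n + 1), ∑ s ∈ Finset.range (n + 1),
            n.choose m * stirling m s * (s.factorial * (k + s).choose s) := by
          refine Finset.sum_congr rfl fun m hm => ?_
          rw [Finset.mem_range] at hm
          rw [J_ext k m n (by omega), Finset.mul_sum]
          refine Finset.sum_congr rfl fun s _ => by ring
      _ = ∑ s ∈ Finset.range (n + 1),
            (∑ m ∈ Finset.range (n + 1), n.choose m * stirling m s)
              * (s.factorial * (k + s).choose s) := by
          rw [Finset.sum_comm]
          exact Finset.sum_congr rfl fun s _ => by rw [Finset.sum_mul]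
      _ = _ := by
          refine Finset.sum_congr rfl fun s _ => by rw [sum_choose_stirling]
  have h2 : ∀ s, stirling (n + 1) (s + 1) = (s + 1) * stirling n (s + 1) + stirling n s :=
    fun s => rfl
  have h3 : ∑ s ∈ Finset.range (n + 1),
        stirling (n + 1) (s + 1) * (s.factorial * (k + s).choose s)
      = (∑ s ∈ Finset.range (n + 1),
          (s + 1) * stirling n (s + 1) * (s.factorial * (k + s).choose s)) + J k n := by
    rw [J, ← Finset.sum_add_distrib]
    refine Finset.sum_congr rfl fun s _ => ?_
    rw [h2 s]; ring
  -- A = sum over range n (top term vanishes)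
  have h4 : ∑ s ∈ Finset.range (n + 1),
        (s + 1) * stirling n (s + 1) * (s.factorial * (k + s).choose s)
      = ∑ t ∈ Finset.range n, stirling n (t + 1) * ((t + 1).factorial * (k + t).choose t) := by
    rw [Finset.sum_range_succ, stirling_eq_zero_of_lt (Nat.lt_succ_self n)]
    simp only [Nat.mul_zero, Nat.zero_mul, Nat.add_zero]
    refine Finset.sum_congr rfl fun t _ => ?_
    rw [Nat.factorial_succ]; ring
  have h5 : D k n = stirling n 0
      + ∑ t ∈ Finset.range n, stirling n (t + 1) * ((t + 1).factorial * (k + t).choose (t + 1)) := by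
    rw [D, Finset.sum_range_succ' (fun s => stirling n s * s.factorial * (k + s - 1).choose s)]
    simp only [Nat.add_zero, Nat.factorial_zero, Nat.mul_one, Nat.choose_zero_right]
    rw [Nat.add_comm]
    congr 1
    refine Finset.sum_congr rfl fun t _ => ?_
    have : k + (t + 1) - 1 = k + t := by omega
    rw [this]; ring
  have h6 : J k n = stirling n 0
      + ∑ t ∈ Finset.range n, stirling n (t + 1) * ((t + 1).factorial * (k + t + 1).choose (t + 1)) := by
    rw [J, Finset.sum_range_succ' (fun s => stirling n s * s.factorial * (k + s).choose s)]
    simp only [Nat.add_zero, Nat.factorial_zero, Nat.mul_one, Nat.choose_zero_right]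
    rw [Nat.add_comm]
    congr 1
    refine Finset.sum_congr rfl fun t _ => ?_
    rw [← Nat.add_assoc]; ring
  have pascal : ∀ t, (k + t + 1).choose (t + 1) = (k + t).choose t + (k + t).choose (t + 1) :=
    fun t => Nat.choose_succ_succ (k + t) t
  have key : ∑ t ∈ Finset.range n, stirling n (t + 1) * ((t + 1).factorial * (k + t + 1).choose (t + 1))
      = ∑ t ∈ Finset.range n, (stirling n (t + 1) * ((t + 1).factorial * (k + t).choose t)
        + stirling n (t + 1) * ((t + 1).factorial * (k + t).choose (t + 1))) := by
    refine Finset.sum_congr rfl fun t _ => by rw [pascal t]; ring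
  rw [h1, h3, h4, h5, h6, key, Finset.sum_add_distrib]
  ring

lemma D_zero (s : ℕ) : D 0 s = stirling s 0 := by
  rw [D]
  rw [Finset.sum_eq_single 0]
  · simp
  · intro t _ ht
    obtain ⟨u, rfl⟩ := Nat.exists_eq_succ_of_ne_zero ht
    have : 0 + (u + 1) - 1 = u := by omega
    rw [this, Nat.choose_eq_zero_of_lt (Nat.lt_succ_self u), Nat.mul_zero]
  · intro h
    exact absurd (Finset.mem_range.2 (by omega)) h

lemma D_succ (k s : ℕ) : D (k + 1) s = J k s := by
  rw [D, J]
  refine Finset.sum_congr rfl fun t _ => ?_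
  congr 2
  omega

lemma stirling_zero_right (n : ℕ) : stirling n 0 = if n = 0 then 1 else 0 := by
  cases n <;> rfl

lemma P_eq_D (r k n : ℕ) :
    P r k n = ∑ s ∈ Finset.range (n + 1), n.choose s * D k s * r ^ (n - s) := by
  cases k with
  | zero =>
    show r ^ n = _
    rw [Finset.sum_eq_single 0]
    · simp [D_zero, stirling]
    · intro s _ hs
      obtain ⟨u, rfl⟩ := Nat.exists_eq_succ_of_ne_zero hs
      rw [D_zero, stirling_zero_right]
      simp
    · intro h
      exact absurd (Finset.mem_range.2 (by omega)) h
  | succ k =>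
    show (∑ s ∈ Finset.range (n + 1), n.choose s * J k s * r ^ (n - s)) = _
    exact Finset.sum_congr rfl fun s _ => by rw [D_succ]

lemma main_nat (k n r : ℕ) :
    P (r + 1) (k + 1) n + P r k n = 2 * P r (k + 1) n := by
  have hP1 : P (r + 1) (k + 1) n
      = ∑ m ∈ Finset.range (n + 1), n.choose m
          * (∑ s ∈ Finset.range (m + 1), m.choose s * J k s) * r ^ (n - m) := by
    show (∑ s ∈ Finset.range (n + 1), n.choose s * J k s * (r + 1) ^ (n - s)) = _
    have expand : ∀ s, (r + 1) ^ s = ∑ t ∈ Finset.range (s + 1), s.choose t * r ^ (s - t) := by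
      intro s
      rw [Nat.add_comm r 1, add_pow]
      refine Finset.sum_congr rfl fun t ht => ?_
      rw [Finset.mem_range] at ht
      rw [one_pow, Nat.one_mul, Nat.mul_comm, Nat.cast_id]
    calc ∑ s ∈ Finset.range (n + 1), n.choose s * J k s * (r + 1) ^ (n - s)
        = ∑ s ∈ Finset.range (n + 1), ∑ t ∈ Finset.range (n - s + 1),
            n.choose s * J k s * ((n - s).choose t * r ^ (n - s - t)) := by
          refine Finset.sum_congr rfl fun s _ => by rw [expand, Finset.mul_sum]
      _ = ∑ p ∈ (Finset.range (n + 1)).sigma (fun s => Finset.range (n - s + 1)),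
            n.choose p.1 * J k p.1 * ((n - p.1).choose p.2 * r ^ (n - p.1 - p.2)) :=
          Finset.sum_sigma' _ _ _
      _ = ∑ p ∈ (Finset.range (n + 1)).sigma (fun m => Finset.range (m + 1)),
            n.choose p.1 * (p.1.choose p.2 * J k p.2) * r ^ (n - p.1) := by
          refine Finset.sum_nbij' (fun p => ⟨p.1 + p.2, p.1⟩) (fun p => ⟨p.2, p.1 - p.2⟩)
            ?_ ?_ ?_ ?_ ?_
          · rintro ⟨s, t⟩ hp
            simp only [Finset.mem_sigma, Finset.mem_range] at hp ⊢
            omega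
          · rintro ⟨m, s⟩ hp
            simp only [Finset.mem_sigma, Finset.mem_range] at hp ⊢
            omega
          · rintro ⟨s, t⟩ _
            simp
          · rintro ⟨m, s⟩ hp
            simp only [Finset.mem_sigma, Finset.mem_range] at hp
            have h : s + (m - s) = m := by omega
            simp [h]
          · rintro ⟨s, t⟩ hp
            simp only [Finset.mem_sigma, Finset.mem_range] at hp
            have h1 : s + t ≤ n := by omega
            have h2 : s ≤ s + t := by omega
            have : n.choose (s + t) * (s + t).choose s = n.choose s * (n - s).choose t := by
              rw [Nat.choose_mul h2, Nat.add_sub_cancel_left]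
            have hsub : n - s - t = n - (s + t) := by omega
            simp only [hsub]
            calc n.choose s * J k s * ((n - s).choose t * r ^ (n - (s + t)))
                = n.choose s * (n - s).choose t * J k s * r ^ (n - (s + t)) := by ring
              _ = n.choose (s + t) * ((s + t).choose s * J k s) * r ^ (n - (s + t)) := by
                  rw [← this]; ring
      _ = _ := by
          rw [← Finset.sum_sigma' (Finset.range (n + 1)) (fun m => Finset.range (m + 1))
            (fun m s => n.choose m * (m.choose s * J k s) * r ^ (n - m))]
          refine Finset.sum_congr rfl fun m _ => ?_
          rw [Finset.mul_sum, Finset.sum_mul]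
  rw [hP1, P_eq_D]
  have hP2 : P r (k + 1) n
      = ∑ s ∈ Finset.range (n + 1), n.choose s * J k s * r ^ (n - s) := rfl
  rw [hP2, ← Finset.sum_add_distrib, Finset.mul_sum]
  refine Finset.sum_congr rfl fun m _ => ?_
  have := keyJ k m
  calc n.choose m * (∑ s ∈ Finset.range (m + 1), m.choose s * J k s) * r ^ (n - m)
        + n.choose m * D k m * r ^ (n - m)
      = n.choose m * ((∑ s ∈ Finset.range (m + 1), m.choose s * J k s) + D k m) * r ^ (n - m) := by
        ring
    _ = n.choose m * (2 * J k m) * r ^ (n - m) := by rw [this]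
    _ = 2 * (n.choose m * J k m * r ^ (n - m)) := by ring

theorem stmt_13 (n r j : ℕ) (hj : 1 ≤ j) :
    (P (r + 1) j n : ℤ) = 2 * P r j n - P r (j - 1) n := by
  obtain ⟨k, rfl⟩ := Nat.exists_eq_add_of_le hj
  have h := main_nat k n r
  have : ((P (r + 1) (k + 1) n : ℤ)) + P r k n = 2 * P r (k + 1) n := by
    exact_mod_cast h
  simp only [Nat.add_comm 1 k, Nat.add_sub_cancel]
  linarith
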